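/- Let X have positive Lebesgue measure, let λ_X denote Lebesgue measure restricted to X, let c : X×X → ℝ be continuous and τ > 0. Then the map (μ, ν) ↦ T_τ(μ,ν) + τ H(μ|λ_X) is jointly convex on P(X)×P(X) with values in (−∞,+∞]: for all pairs (μ₀,ν₀), (μ₁,ν₁) ∈ P(X)² and t ∈ [0,1], writing μ_t := (1−t)μ₀ + tμ₁ and ν_t := (1−t)ν₀ + tν₁, one has T_τ(μ_t, ν_t) + τ H(μ_t|λ_X) ≤ (1−t)[T_τ(μ₀,ν₀) + τ H(μ₀|λ_X)] + t[T_τ(μ₁,ν₁) + τ H(μ₁|λ_X)]. -/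

import Mathlib

open MeasureTheory Real Set
open scoped ENNReal

abbrev Pt (d : ℕ) := EuclideanSpace ℝ (Fin d)

-- Relative entropy `H(γ|ρ)`, with values in `(-∞, +∞]`.
open Classical in
noncomputable def relEnt {α : Type*} [MeasurableSpace α] (γ ρ : Measure α) : EReal :=
  if γ ≪ ρ ∧ Integrable (fun x => Real.log ((γ.rnDeriv ρ x).toReal)) γ
  then ((∫ x, Real.log ((γ.rnDeriv ρ x).toReal) ∂γ : ℝ) : EReal)
  else ⊤

-- Entropic optimal transport cost `T_τ(μ,ν) = inf_{γ ∈ Π(μ,ν)} ∫ c dγ + τ H(γ|μ⊗ν)`.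
noncomputable def EOT {α : Type*} [MeasurableSpace α] (c : α × α → ℝ) (τ : ℝ)
    (μ ν : Measure α) : EReal :=
  ⨅ γ : {γ : Measure (α × α) // γ.map Prod.fst = μ ∧ γ.map Prod.snd = ν},
    ((∫ q, c q ∂(γ : Measure (α × α)) : ℝ) : EReal)
      + (τ : EReal) * relEnt (γ : Measure (α × α)) (μ.prod ν)

section Lemmas

variable {α : Type*} [MeasurableSpace α]

lemma relEnt_eq {γ ρ : Measure α} (h : γ ≪ ρ) (h' : Integrable (llr γ ρ) γ) :
    relEnt γ ρ = ((∫ x, llr γ ρ x ∂γ : ℝ) : EReal) := by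
  rw [relEnt, if_pos ⟨h, h'⟩]; rfl

lemma relEnt_eq_top {γ ρ : Measure α} (h : ¬ (γ ≪ ρ ∧ Integrable (llr γ ρ) γ)) :
    relEnt γ ρ = ⊤ := by
  rw [relEnt, if_neg]; exact fun hh => h hh

lemma relEnt_ne_bot (γ ρ : Measure α) : relEnt γ ρ ≠ ⊥ := by
  rw [relEnt]; split
  · exact EReal.coe_ne_bot _
  · simp

/-- Negative part of the log-likelihood ratio is always integrable. -/
lemma integrable_min_llr (γ ρ : Measure α) [IsFiniteMeasure γ] [IsFiniteMeasure ρ]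
    (h : γ ≪ ρ) : Integrable (fun x => min (llr γ ρ x) 0) γ := by
  refine ⟨((measurable_llr γ ρ).min measurable_const).stronglyMeasurable.aestronglyMeasurable, ?_⟩
  rw [hasFiniteIntegral_iff_norm]
  have hmeas : AEMeasurable (fun x => ENNReal.ofReal ‖min (llr γ ρ x) 0‖) ρ :=
    (((measurable_llr γ ρ).min measurable_const).norm.ennreal_ofReal).aemeasurable
  rw [← MeasureTheory.lintegral_rnDeriv_mul h hmeas]
  calc ∫⁻ x, γ.rnDeriv ρ x * ENNReal.ofReal ‖min (llr γ ρ x) 0‖ ∂ρ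
      ≤ ∫⁻ _, 1 ∂ρ := by
        refine lintegral_mono_ae ?_
        filter_upwards [Measure.rnDeriv_lt_top γ ρ] with x hx
        set s : ℝ := (γ.rnDeriv ρ x).toReal with hs
        have hs0 : 0 ≤ s := ENNReal.toReal_nonneg
        have hfx : γ.rnDeriv ρ x = ENNReal.ofReal s := by
          rw [hs, ENNReal.ofReal_toReal hx.ne]
        rw [hfx, ← ENNReal.ofReal_mul ENNReal.toReal_nonneg]
        refine le_trans (ENNReal.ofReal_le_ofReal ?_) (by norm_num : ENNReal.ofReal 1 ≤ 1)
        have hllr : llr γ ρ x = Real.log s := by rw [llr, ← hs]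
        rcases le_or_gt 1 s with h1 | h1
        · have : min (llr γ ρ x) 0 = 0 := by
            rw [hllr, min_eq_right_iff]; exact Real.log_nonneg h1
          simp [this]
        rcases eq_or_lt_of_le hs0 with h0 | h0
        · have : min (llr γ ρ x) 0 = 0 := by rw [hllr, ← h0]; simp
          simp [this, ← h0]
        · have hlog : Real.log s < 0 := Real.log_neg h0 h1
          have hmin : min (llr γ ρ x) 0 = Real.log s := by rw [hllr]; exact min_eq_left hlog.le
          rw [hmin, Real.norm_eq_abs, abs_of_neg hlog]
          have hinv : -Real.log s ≤ s⁻¹ - 1 := by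
            rw [← Real.log_inv]
            exact Real.log_le_sub_one_of_pos (by positivity)
          have : s * -Real.log s ≤ s * (s⁻¹ - 1) := by
            exact mul_le_mul_of_nonneg_left hinv hs0
          have hss : s * (s⁻¹ - 1) = 1 - s := by
            field_simp
          nlinarith
      _ < ⊤ := by simpa using measure_lt_top ρ univ

/-- Relative entropy between probability measures is nonnegative. -/
lemma relEnt_nonneg (γ ρ : Measure α) [IsProbabilityMeasure γ] [IsProbabilityMeasure ρ] :
    0 ≤ relEnt γ ρ := by
  by_cases hc : γ ≪ ρ ∧ Integrable (llr γ ρ) γ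
  · obtain ⟨h, hint⟩ := hc
    rw [relEnt_eq h hint]
    have hg_meas : Measurable (fun x => ((γ.rnDeriv ρ x)⁻¹).toReal) :=
      (Measure.measurable_rnDeriv γ ρ).inv.ennreal_toReal
    have hlint : ∫⁻ x, (γ.rnDeriv ρ x)⁻¹ ∂γ ≤ 1 := by
      rw [← MeasureTheory.lintegral_rnDeriv_mul h
        (f := fun x => (γ.rnDeriv ρ x)⁻¹) (Measure.measurable_rnDeriv γ ρ).inv.aemeasurable]
      calc ∫⁻ x, γ.rnDeriv ρ x * (γ.rnDeriv ρ x)⁻¹ ∂ρ ≤ ∫⁻ _, 1 ∂ρ :=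
            lintegral_mono fun x => ENNReal.mul_inv_le_one _
        _ = 1 := by simp
    have hinv_int : Integrable (fun x => ((γ.rnDeriv ρ x)⁻¹).toReal) γ :=
      integrable_toReal_of_lintegral_ne_top
        (Measure.measurable_rnDeriv γ ρ).inv.aemeasurable
        (lt_of_le_of_lt hlint (by norm_num)).ne
    have hpos := Measure.rnDeriv_pos h
    have h_int_le : ∫ x, ((γ.rnDeriv ρ x)⁻¹).toReal ∂γ ≤ 1 := by
      rw [integral_toReal (f := fun x => (γ.rnDeriv ρ x)⁻¹) (Measure.measurable_rnDeriv γ ρ).inv.aemeasurable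
        (by filter_upwards [hpos] with x hx; exact ENNReal.inv_lt_top.2 hx)]
      exact (ENNReal.toReal_le_toReal (lt_of_le_of_lt hlint (by norm_num)).ne
        (by norm_num)).2 hlint |>.trans (by norm_num)
    have hminor : ∀ᵐ x ∂γ, 1 - ((γ.rnDeriv ρ x)⁻¹).toReal ≤ llr γ ρ x := by
      filter_upwards [hpos, h.ae_le (Measure.rnDeriv_lt_top γ ρ)] with x hx hx'
      have hs : 0 < (γ.rnDeriv ρ x).toReal := ENNReal.toReal_pos hx.ne' hx'.ne
      have : Real.log ((γ.rnDeriv ρ x).toReal)⁻¹ ≤ ((γ.rnDeriv ρ x).toReal)⁻¹ - 1 :=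
        Real.log_le_sub_one_of_pos (by positivity)
      rw [Real.log_inv] at this
      rw [llr, ENNReal.toReal_inv]
      linarith
    have : (0:ℝ) ≤ ∫ x, llr γ ρ x ∂γ := by
      have h1 : ∫ x, (1 - ((γ.rnDeriv ρ x)⁻¹).toReal) ∂γ ≤ ∫ x, llr γ ρ x ∂γ :=
        integral_mono_ae ((integrable_const 1).sub hinv_int) hint hminor
      rw [integral_sub (integrable_const 1) hinv_int] at h1
      simp only [integral_const, probReal_univ, smul_eq_mul, one_mul] at h1
      linarith
    exact_mod_cast this
  · rw [relEnt_eq_top hc]; exact le_top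

variable {β : Type*} [MeasurableSpace β]

lemma prod_smul_right (μ : Measure α) (ν : Measure β) [SFinite μ] [IsFiniteMeasure ν]
    (c : ℝ≥0∞) (hc : c ≠ ⊤) : μ.prod (c • ν) = c • (μ.prod ν) := by
  have : IsFiniteMeasure (c • ν) :=
    ⟨by simp only [Measure.smul_apply, smul_eq_mul]
        exact ENNReal.mul_lt_top hc.lt_top (measure_lt_top ν univ)⟩
  ext s hs
  rw [Measure.smul_apply, smul_eq_mul, Measure.prod_apply hs, Measure.prod_apply hs]
  simp only [Measure.smul_apply, smul_eq_mul]
  rw [lintegral_const_mul' _ _ hc]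

lemma prod_withDensity_left (lam : Measure α) (ν : Measure β) [SFinite lam] [IsFiniteMeasure ν]
    {g : α → ℝ≥0∞} (hg : Measurable g) :
    (lam.withDensity g).prod ν = (lam.prod ν).withDensity (fun p => g p.1) := by
  ext s hs
  have hmeas : AEMeasurable (Set.indicator s fun p : α × β => g p.1) (lam.prod ν) :=
    (Measurable.indicator (hg.comp measurable_fst) hs).aemeasurable
  rw [withDensity_apply _ hs, Measure.prod_apply hs, ← lintegral_indicator hs,
    MeasureTheory.lintegral_prod _ hmeas,
    lintegral_withDensity_eq_lintegral_mul _ hg (measurable_measure_prodMk_left hs)]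
  refine lintegral_congr fun x => ?_
  have h1 : (fun y => s.indicator (fun p : α × β => g p.1) (x, y))
      = (Prod.mk x ⁻¹' s).indicator (fun _ => g x) := by
    funext y
    by_cases hxy : (x, y) ∈ s
    · rw [Set.indicator_of_mem hxy, Set.indicator_of_mem (by exact hxy)]
    · rw [Set.indicator_of_notMem hxy, Set.indicator_of_notMem (by exact hxy)]
  rw [h1, lintegral_indicator (measurable_prodMk_left hs), setLIntegral_const]
  simp [mul_comm]

lemma rnDeriv_prod_left {μ lam : Measure α} (ν : Measure β) [IsFiniteMeasure μ]
    [IsFiniteMeasure lam] [IsFiniteMeasure ν] (h : μ ≪ lam) :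
    (μ.prod ν).rnDeriv (lam.prod ν) =ᵐ[lam.prod ν] fun p => μ.rnDeriv lam p.1 := by
  have hwd : (lam.prod ν).withDensity (fun p => μ.rnDeriv lam p.1) = μ.prod ν := by
    rw [← prod_withDensity_left lam ν (Measure.measurable_rnDeriv μ lam),
      Measure.withDensity_rnDeriv_eq μ lam h]
  rw [← hwd]
  exact Measure.rnDeriv_withDensity _ ((Measure.measurable_rnDeriv μ lam).comp measurable_fst)

lemma ac_add_smul_left {μ0 μ1 : Measure α} {c d : ℝ≥0∞} (hc : c ≠ 0) :
    μ0 ≪ c • μ0 + d • μ1 := by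
  refine Measure.AbsolutelyContinuous.mk fun s hs h0 => ?_
  rw [Measure.add_apply, Measure.smul_apply, Measure.smul_apply, smul_eq_mul, smul_eq_mul,
    add_eq_zero] at h0
  exact (mul_eq_zero.mp h0.1).resolve_left hc

lemma ac_add_smul_right {μ0 μ1 : Measure α} {c d : ℝ≥0∞} (hd : d ≠ 0) :
    μ1 ≪ c • μ0 + d • μ1 := by
  refine Measure.AbsolutelyContinuous.mk fun s hs h0 => ?_
  rw [Measure.add_apply, Measure.smul_apply, Measure.smul_apply, smul_eq_mul, smul_eq_mul,
    add_eq_zero] at h0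
  exact (mul_eq_zero.mp h0.2).resolve_left hd

lemma add_smul_ac {γ0 γ1 ξ : Measure α} (h0 : γ0 ≪ ξ) (h1 : γ1 ≪ ξ) (c d : ℝ≥0∞) :
    c • γ0 + d • γ1 ≪ ξ := by
  refine Measure.AbsolutelyContinuous.mk fun s hs hn => ?_
  rw [Measure.add_apply, Measure.smul_apply, Measure.smul_apply, h0 hn, h1 hn]
  simp

section Chain

variable {γ : Measure (α × α)} {μ ν lam : Measure α}
  [IsProbabilityMeasure γ] [IsProbabilityMeasure μ] [IsProbabilityMeasure ν] [IsFiniteMeasure lam]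

lemma llr_decomp (hfst : γ.map Prod.fst = μ) (h1 : γ ≪ μ.prod ν) (h2 : μ ≪ lam) :
    llr γ (lam.prod ν) =ᵐ[γ] fun p => llr γ (μ.prod ν) p + llr μ lam p.1 := by
  have hpac : μ.prod ν ≪ lam.prod ν :=
    Measure.AbsolutelyContinuous.prod h2 Measure.AbsolutelyContinuous.rfl
  have hγac : γ ≪ lam.prod ν := h1.trans hpac
  have hmul := Measure.rnDeriv_mul_rnDeriv (κ := lam.prod ν) h1
  have hprod := rnDeriv_prod_left ν h2
  have hpos1 := Measure.rnDeriv_pos h1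
  have hlt1 := h1.ae_le (Measure.rnDeriv_lt_top γ (μ.prod ν))
  have hposμ : ∀ᵐ p ∂γ, 0 < μ.rnDeriv lam p.1 := by
    refine (MeasureTheory.ae_map_iff measurable_fst.aemeasurable
      (measurableSet_lt measurable_const (Measure.measurable_rnDeriv μ lam))).1 ?_
    rw [hfst]
    exact Measure.rnDeriv_pos h2
  have hltμ : ∀ᵐ p ∂γ, μ.rnDeriv lam p.1 < ∞ := by
    refine (MeasureTheory.ae_map_iff measurable_fst.aemeasurable
      (measurableSet_lt (Measure.measurable_rnDeriv μ lam) measurable_const)).1 ?_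
    rw [hfst]
    exact h2.ae_le (Measure.rnDeriv_lt_top μ lam)
  filter_upwards [hγac.ae_le hmul, hγac.ae_le hprod, hpos1, hlt1, hposμ, hltμ]
    with p hm hp h01 h02 h03 h04
  rw [llr, llr, llr, ← hm, Pi.mul_apply, hp, ENNReal.toReal_mul, Real.log_mul]
  · exact (ENNReal.toReal_pos h01.ne' h02.ne).ne'
  · exact (ENNReal.toReal_pos h03.ne' h04.ne).ne'

lemma integrable_comp_fst {g : α → ℝ} (hg : StronglyMeasurable g) (hfst : γ.map Prod.fst = μ) :
    Integrable (fun p : α × α => g p.1) γ ↔ Integrable g μ := by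
  rw [← hfst]
  exact (integrable_map_measure hg.aestronglyMeasurable measurable_fst.aemeasurable).symm

lemma integral_comp_fst {g : α → ℝ} (hg : StronglyMeasurable g) (hfst : γ.map Prod.fst = μ) :
    ∫ p, g p.1 ∂γ = ∫ x, g x ∂μ := by
  rw [← hfst, integral_map measurable_fst.aemeasurable hg.aestronglyMeasurable]

lemma chain_forward (hfst : γ.map Prod.fst = μ) (h1 : γ ≪ μ.prod ν) (h2 : μ ≪ lam)
    (hu : Integrable (llr γ (μ.prod ν)) γ) (hy : Integrable (llr μ lam) μ) :
    γ ≪ lam.prod ν ∧ Integrable (llr γ (lam.prod ν)) γ ∧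
      ∫ p, llr γ (lam.prod ν) p ∂γ = ∫ p, llr γ (μ.prod ν) p ∂γ + ∫ x, llr μ lam x ∂μ := by
  have hd := llr_decomp hfst h1 h2
  have hyγ : Integrable (fun p : α × α => llr μ lam p.1) γ :=
    (integrable_comp_fst (stronglyMeasurable_llr μ lam) hfst).2 hy
  have hsum : Integrable (fun p => llr γ (μ.prod ν) p + llr μ lam p.1) γ := hu.add hyγ
  refine ⟨h1.trans (Measure.AbsolutelyContinuous.prod h2 Measure.AbsolutelyContinuous.rfl),
    (integrable_congr hd).2 hsum, ?_⟩
  rw [integral_congr_ae hd, integral_add hu hyγ,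
    integral_comp_fst (stronglyMeasurable_llr μ lam) hfst]

lemma chain_reverse (hfst : γ.map Prod.fst = μ) (h1 : γ ≪ μ.prod ν) (h2 : μ ≪ lam)
    (hw : Integrable (llr γ (lam.prod ν)) γ) :
    Integrable (llr γ (μ.prod ν)) γ ∧ Integrable (llr μ lam) μ ∧
      ∫ p, llr γ (lam.prod ν) p ∂γ = ∫ p, llr γ (μ.prod ν) p ∂γ + ∫ x, llr μ lam x ∂μ := by
  have hd := llr_decomp hfst h1 h2
  have humin : Integrable (fun p => min (llr γ (μ.prod ν) p) 0) γ := integrable_min_llr _ _ h1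
  have hymin' : Integrable (fun x => min (llr μ lam x) 0) μ := integrable_min_llr _ _ h2
  have hymin : Integrable (fun p : α × α => min (llr μ lam p.1) 0) γ :=
    (integrable_comp_fst ((measurable_llr μ lam).min measurable_const).stronglyMeasurable
      hfst).2 hymin'
  have humax : Integrable (fun p => max (llr γ (μ.prod ν) p) 0) γ := by
    refine Integrable.mono' (hw.abs.add hymin.neg)
      ((((measurable_llr _ _).max measurable_const).stronglyMeasurable).aestronglyMeasurable) ?_
    filter_upwards [hd] with p hp
    rw [Real.norm_eq_abs, abs_of_nonneg (le_max_right _ _)]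
    simp only [Pi.add_apply, Pi.neg_apply]
    have h1' : llr γ (lam.prod ν) p ≤ |llr γ (lam.prod ν) p| := le_abs_self _
    have h2' : min (llr μ lam p.1) 0 ≤ llr μ lam p.1 := min_le_left _ _
    have h3' : min (llr μ lam p.1) 0 ≤ 0 := min_le_right _ _
    have h4' : (0:ℝ) ≤ |llr γ (lam.prod ν) p| := abs_nonneg _
    exact max_le (by linarith) (by linarith)
  have hu : Integrable (llr γ (μ.prod ν)) γ := by
    have h5 := humax.add humin
    have h6 : ((fun p => max (llr γ (μ.prod ν) p) 0) + (fun p => min (llr γ (μ.prod ν) p) 0))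
        = llr γ (μ.prod ν) := by
      funext p
      simp only [Pi.add_apply]
      rw [max_add_min, add_zero]
    rwa [h6] at h5
  have hyγ : Integrable (fun p : α × α => llr μ lam p.1) γ := by
    have h7 : (fun p : α × α => llr μ lam p.1)
        =ᵐ[γ] fun p => llr γ (lam.prod ν) p - llr γ (μ.prod ν) p := by
      filter_upwards [hd] with p hp
      rw [hp]; ring
    exact (integrable_congr h7).2 (hw.sub hu)
  exact ⟨hu, (integrable_comp_fst (stronglyMeasurable_llr μ lam) hfst).1 hyγ, by
    rw [integral_congr_ae hd, integral_add hu hyγ,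
      integral_comp_fst (stronglyMeasurable_llr μ lam) hfst]⟩

end Chain


section Convexity

lemma isFiniteMeasure_combo {μ0 μ1 : Measure α} [IsFiniteMeasure μ0] [IsFiniteMeasure μ1]
    {c d : ℝ≥0∞} (hc : c ≠ ∞) (hd : d ≠ ∞) : IsFiniteMeasure (c • μ0 + d • μ1) := by
  constructor
  rw [Measure.add_apply, Measure.smul_apply, Measure.smul_apply, smul_eq_mul, smul_eq_mul]
  exact ENNReal.add_lt_top.2 ⟨ENNReal.mul_lt_top hc.lt_top (measure_lt_top μ0 univ),
    ENNReal.mul_lt_top hd.lt_top (measure_lt_top μ1 univ)⟩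

lemma llr_mix_component {γ' ρ' γ ρ : Measure α} [IsProbabilityMeasure γ'] [IsFiniteMeasure ρ']
    [IsFiniteMeasure γ] [IsFiniteMeasure ρ]
    (h' : γ' ≪ ρ') (hint' : Integrable (llr γ' ρ') γ')
    (hγ'γ : γ' ≪ γ) (hρ'ρ : ρ' ≪ ρ) (hγρ : γ ≪ ρ)
    (hmin : Integrable (fun x => min (llr γ ρ x) 0) γ')
    (hA : ∫⁻ x, γ.rnDeriv ρ x ∂ρ' ≠ ∞) :
    Integrable (llr γ ρ) γ' ∧
      ∫ x, llr γ ρ x ∂γ' ≤ ∫ x, llr γ' ρ' x ∂γ'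
        + (∫⁻ x, γ.rnDeriv ρ x ∂ρ').toReal - 1 := by
  set A := ∫⁻ x, γ.rnDeriv ρ x ∂ρ' with hAdef
  set h : α → ℝ := fun x => (γ.rnDeriv ρ x / γ'.rnDeriv ρ' x).toReal with hh
  have hmeas : Measurable fun x => γ.rnDeriv ρ x / γ'.rnDeriv ρ' x :=
    (Measure.measurable_rnDeriv γ ρ).div (Measure.measurable_rnDeriv γ' ρ')
  have hf0pos := Measure.rnDeriv_pos h'
  have hf0lt := h'.ae_le (Measure.rnDeriv_lt_top γ' ρ')
  have hfpos : ∀ᵐ x ∂γ', 0 < γ.rnDeriv ρ x := hγ'γ.ae_le (Measure.rnDeriv_pos hγρ)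
  have hflt : ∀ᵐ x ∂γ', γ.rnDeriv ρ x < ∞ := (h'.trans hρ'ρ).ae_le (Measure.rnDeriv_lt_top γ ρ)
  have hlint : ∫⁻ x, γ.rnDeriv ρ x / γ'.rnDeriv ρ' x ∂γ' ≤ A := by
    rw [← MeasureTheory.lintegral_rnDeriv_mul h' hmeas.aemeasurable]
    exact lintegral_mono fun x => ENNReal.mul_div_le
  have hh_int : Integrable h γ' :=
    integrable_toReal_of_lintegral_ne_top hmeas.aemeasurable (hlint.trans_lt hA.lt_top).ne
  have hh_nonneg : ∀ x, 0 ≤ h x := fun x => ENNReal.toReal_nonneg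
  have hh_le : ∫ x, h x ∂γ' ≤ A.toReal := by
    rw [hh, integral_toReal hmeas.aemeasurable ?_]
    · exact ENNReal.toReal_mono hA hlint
    · filter_upwards [hflt, hf0pos] with x h1 h2
      exact ENNReal.div_lt_top h1.ne h2.ne'
  have hptwise : ∀ᵐ x ∂γ', llr γ ρ x ≤ llr γ' ρ' x + (h x - 1) := by
    filter_upwards [hf0pos, hf0lt, hfpos, hflt] with x h1 h2 h3 h4
    have hs' : 0 < (γ'.rnDeriv ρ' x).toReal := ENNReal.toReal_pos h1.ne' h2.ne
    have hs : 0 < (γ.rnDeriv ρ x).toReal := ENNReal.toReal_pos h3.ne' h4.ne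
    have hdiv : h x = (γ.rnDeriv ρ x).toReal / (γ'.rnDeriv ρ' x).toReal := by
      rw [hh]; exact ENNReal.toReal_div _ _
    have hlog : Real.log ((γ.rnDeriv ρ x).toReal / (γ'.rnDeriv ρ' x).toReal)
        ≤ (γ.rnDeriv ρ x).toReal / (γ'.rnDeriv ρ' x).toReal - 1 :=
      Real.log_le_sub_one_of_pos (by positivity)
    rw [Real.log_div hs.ne' hs'.ne'] at hlog
    rw [llr, llr, hdiv]
    linarith
  have hint : Integrable (llr γ ρ) γ' := by
    have hmax : Integrable (fun x => max (llr γ ρ x) 0) γ' := by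
      refine Integrable.mono' (hint'.abs.add hh_int)
        (((measurable_llr _ _).max measurable_const).stronglyMeasurable.aestronglyMeasurable) ?_
      filter_upwards [hptwise] with x hx
      rw [Real.norm_eq_abs, abs_of_nonneg (le_max_right _ _)]
      simp only [Pi.add_apply]
      refine max_le ?_ ?_
      · have := le_abs_self (llr γ' ρ' x); linarith [hh_nonneg x]
      · have := abs_nonneg (llr γ' ρ' x); linarith [hh_nonneg x]
    have h5 := hmax.add hmin
    have h6 : ((fun x => max (llr γ ρ x) 0) + (fun x => min (llr γ ρ x) 0)) = llr γ ρ := by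
      funext x
      simp only [Pi.add_apply]
      rw [max_add_min, add_zero]
    rwa [h6] at h5
  refine ⟨hint, ?_⟩
  have hmono := integral_mono_ae hint (hint'.add (hh_int.sub (integrable_const 1))) hptwise
  simp only [Pi.add_apply, Pi.sub_apply] at hmono
  have h8 : Integrable (fun x => h x - 1) γ' := hh_int.sub (integrable_const 1)
  have h9 : ∫ a, (llr γ' ρ' a + (h a - 1)) ∂γ' = ∫ a, llr γ' ρ' a ∂γ' + ∫ a, (h a - 1) ∂γ' :=
    integral_add hint' h8
  have h10 : ∫ a, (h a - 1) ∂γ' = (∫ a, h a ∂γ') - 1 := by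
    rw [integral_sub hh_int (integrable_const 1)]
    simp
  rw [h9, h10] at hmono
  linarith

lemma relEnt_mix {γ0 γ1 ρ0 ρ1 : Measure α} [IsProbabilityMeasure γ0] [IsProbabilityMeasure γ1]
    [IsFiniteMeasure ρ0] [IsFiniteMeasure ρ1]
    (h0 : γ0 ≪ ρ0) (h1 : γ1 ≪ ρ1)
    (hi0 : Integrable (llr γ0 ρ0) γ0) (hi1 : Integrable (llr γ1 ρ1) γ1)
    {a b : ℝ} (ha : 0 < a) (hb : 0 < b) (hab : a + b = 1) :
    (ENNReal.ofReal a • γ0 + ENNReal.ofReal b • γ1)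
        ≪ (ENNReal.ofReal a • ρ0 + ENNReal.ofReal b • ρ1) ∧
    Integrable (llr (ENNReal.ofReal a • γ0 + ENNReal.ofReal b • γ1)
        (ENNReal.ofReal a • ρ0 + ENNReal.ofReal b • ρ1))
        (ENNReal.ofReal a • γ0 + ENNReal.ofReal b • γ1) ∧
    ∫ x, llr (ENNReal.ofReal a • γ0 + ENNReal.ofReal b • γ1)
        (ENNReal.ofReal a • ρ0 + ENNReal.ofReal b • ρ1) x
        ∂(ENNReal.ofReal a • γ0 + ENNReal.ofReal b • γ1)
      ≤ a * ∫ x, llr γ0 ρ0 x ∂γ0 + b * ∫ x, llr γ1 ρ1 x ∂γ1 := by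
  have ha' : ENNReal.ofReal a ≠ 0 := by
    simp only [ne_eq, ENNReal.ofReal_eq_zero, not_le]; exact ha
  have hb' : ENNReal.ofReal b ≠ 0 := by
    simp only [ne_eq, ENNReal.ofReal_eq_zero, not_le]; exact hb
  have ha'top : ENNReal.ofReal a ≠ ∞ := ENNReal.ofReal_ne_top
  have hb'top : ENNReal.ofReal b ≠ ∞ := ENNReal.ofReal_ne_top
  set γ := ENNReal.ofReal a • γ0 + ENNReal.ofReal b • γ1 with hγ
  set ρ := ENNReal.ofReal a • ρ0 + ENNReal.ofReal b • ρ1 with hρ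
  haveI hγfin : IsFiniteMeasure γ := isFiniteMeasure_combo ha'top hb'top
  haveI hρfin : IsFiniteMeasure ρ := isFiniteMeasure_combo ha'top hb'top
  haveI hγprob : IsProbabilityMeasure γ := by
    constructor
    rw [hγ, Measure.add_apply, Measure.smul_apply, Measure.smul_apply, smul_eq_mul, smul_eq_mul,
      measure_univ, measure_univ, mul_one, mul_one, ← ENNReal.ofReal_add ha.le hb.le, hab,
      ENNReal.ofReal_one]
  have hγ0γ : γ0 ≪ γ := ac_add_smul_left ha'
  have hγ1γ : γ1 ≪ γ := ac_add_smul_right hb'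
  have hρ0ρ : ρ0 ≪ ρ := ac_add_smul_left ha'
  have hρ1ρ : ρ1 ≪ ρ := ac_add_smul_right hb'
  have hγρ : γ ≪ ρ := add_smul_ac (h0.trans hρ0ρ) (h1.trans hρ1ρ) _ _
  set A0 := ∫⁻ x, γ.rnDeriv ρ x ∂ρ0 with hA0def
  set A1 := ∫⁻ x, γ.rnDeriv ρ x ∂ρ1 with hA1def
  have hsum : ENNReal.ofReal a * A0 + ENNReal.ofReal b * A1 = 1 := by
    rw [hA0def, hA1def, ← smul_eq_mul, ← smul_eq_mul, ← lintegral_smul_measure, ← lintegral_smul_measure,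
      ← lintegral_add_measure, ← hρ, Measure.lintegral_rnDeriv hγρ, measure_univ]
  have hA0top : A0 ≠ ∞ := by
    intro htop
    rw [htop, ENNReal.mul_top ha'] at hsum
    simp at hsum
  have hA1top : A1 ≠ ∞ := by
    intro htop
    rw [htop, ENNReal.mul_top hb'] at hsum
    simp at hsum
  have hminγ : Integrable (fun x => min (llr γ ρ x) 0) γ := integrable_min_llr _ _ hγρ
  have hmin0 : Integrable (fun x => min (llr γ ρ x) 0) γ0 := by
    refine (integrable_smul_measure ha' ha'top).1 (hminγ.mono_measure ?_)
    rw [hγ]; exact Measure.le_add_right le_rfl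
  have hmin1 : Integrable (fun x => min (llr γ ρ x) 0) γ1 := by
    refine (integrable_smul_measure hb' hb'top).1 (hminγ.mono_measure ?_)
    rw [hγ]; exact Measure.le_add_left le_rfl
  obtain ⟨hint0, hle0⟩ := llr_mix_component h0 hi0 hγ0γ hρ0ρ hγρ hmin0 hA0top
  obtain ⟨hint1, hle1⟩ := llr_mix_component h1 hi1 hγ1γ hρ1ρ hγρ hmin1 hA1top
  have hint : Integrable (llr γ ρ) γ := by
    rw [hγ, integrable_add_measure]
    exact ⟨(integrable_smul_measure ha' ha'top).2 hint0,
      (integrable_smul_measure hb' hb'top).2 hint1⟩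
  refine ⟨hγρ, hint, ?_⟩
  have hAreal : a * A0.toReal + b * A1.toReal = 1 := by
    have h2 := congrArg ENNReal.toReal hsum
    rw [ENNReal.toReal_add (ENNReal.mul_ne_top ha'top hA0top) (ENNReal.mul_ne_top hb'top hA1top),
      ENNReal.toReal_mul, ENNReal.toReal_mul, ENNReal.toReal_ofReal ha.le,
      ENNReal.toReal_ofReal hb.le, ENNReal.toReal_one] at h2
    exact h2
  have hsplit : ∫ x, llr γ ρ x ∂γ
      = a * ∫ x, llr γ ρ x ∂γ0 + b * ∫ x, llr γ ρ x ∂γ1 := by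
    rw [hγ, integral_add_measure ((integrable_smul_measure ha' ha'top).2 hint0)
      ((integrable_smul_measure hb' hb'top).2 hint1), integral_smul_measure,
      integral_smul_measure, ENNReal.toReal_ofReal ha.le, ENNReal.toReal_ofReal hb.le,
      smul_eq_mul, smul_eq_mul]
  rw [hsplit]
  have ha0 := mul_le_mul_of_nonneg_left hle0 ha.le
  have hb0 := mul_le_mul_of_nonneg_left hle1 hb.le
  rw [← hA0def] at ha0
  rw [← hA1def] at hb0
  nlinarith [hAreal]

end Convexity


section ERealHelpers

lemma ereal_exists_real {x : EReal} (h1 : x ≠ ⊤) (h2 : x ≠ ⊥) : ∃ r : ℝ, x = (r : EReal) := by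
  induction x using EReal.rec with
  | bot => exact absurd rfl h2
  | coe r => exact ⟨r, rfl⟩
  | top => exact absurd rfl h1

lemma ereal_tau_mul_nonneg {τ : ℝ} (hτ : 0 ≤ τ) {x : EReal} (hx : 0 ≤ x) :
    0 ≤ (τ : EReal) * x := by
  induction x using EReal.rec with
  | bot => exact absurd hx (by simp)
  | coe r =>
    rw [← EReal.coe_mul]
    have hr : (0:ℝ) ≤ r := by exact_mod_cast hx
    exact_mod_cast mul_nonneg hτ hr
  | top =>
    rcases eq_or_lt_of_le hτ with h | h
    · rw [← h]; simp
    · rw [EReal.coe_mul_top_of_pos h]; exact le_top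

lemma ereal_tau_mul_ne_bot {τ : ℝ} (hτ : 0 < τ) {x : EReal} (hx : x ≠ ⊥) :
    (τ : EReal) * x ≠ ⊥ := by
  induction x using EReal.rec with
  | bot => exact absurd rfl hx
  | coe r => rw [← EReal.coe_mul]; exact EReal.coe_ne_bot _
  | top => rw [EReal.coe_mul_top_of_pos hτ]; simp

lemma ereal_add_ne_bot {x y : EReal} (hx : x ≠ ⊥) (hy : y ≠ ⊥) : x + y ≠ ⊥ := by
  simp [EReal.add_eq_bot_iff, hx, hy]

lemma ereal_pos_mul_ne_bot {b : ℝ} (hb : 0 < b) {x : EReal} (hx : x ≠ ⊥) :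
    (b : EReal) * x ≠ ⊥ := ereal_tau_mul_ne_bot hb hx

lemma ereal_sum_top_left {a b : ℝ} (ha : 0 < a) (hb : 0 < b) {A B : EReal}
    (hA : A = ⊤) (hB : B ≠ ⊥) : ((a : EReal) * A + (b : EReal) * B) = ⊤ := by
  rw [hA, EReal.coe_mul_top_of_pos ha]
  exact EReal.top_add_of_ne_bot (ereal_pos_mul_ne_bot hb hB)

lemma ereal_sum_top_right {a b : ℝ} (ha : 0 < a) (hb : 0 < b) {A B : EReal}
    (hA : A ≠ ⊥) (hB : B = ⊤) : ((a : EReal) * A + (b : EReal) * B) = ⊤ := by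
  rw [hB, EReal.coe_mul_top_of_pos hb]
  exact EReal.add_top_of_ne_bot (ereal_pos_mul_ne_bot ha hA)

lemma ereal_le_of_forall_eps {x : EReal} {y : ℝ}
    (h : ∀ ε : ℝ, 0 < ε → x ≤ ((y + ε : ℝ) : EReal)) : x ≤ (y : EReal) := by
  induction x using EReal.rec with
  | bot => exact bot_le
  | coe z =>
    have hzy : ∀ ε : ℝ, 0 < ε → z ≤ y + ε := fun ε hε => by exact_mod_cast h ε hε
    have hle : z ≤ y := by
      by_contra hlt
      push_neg at hlt
      have := hzy ((z - y)/2) (by linarith)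
      linarith
    exact_mod_cast hle
  | top =>
    have := h 1 one_pos
    exact absurd this (not_le.mpr (EReal.coe_lt_top _))

lemma relEnt_ne_top_iff {γ ρ : Measure α} :
    relEnt γ ρ ≠ ⊤ ↔ (γ ≪ ρ ∧ Integrable (llr γ ρ) γ) := by
  constructor
  · intro h
    by_contra hc
    exact h (relEnt_eq_top hc)
  · rintro ⟨h1, h2⟩
    rw [relEnt_eq h1 h2]
    exact EReal.coe_ne_top _

lemma isProbabilityMeasure_combo {μ0 μ1 : Measure α} [IsProbabilityMeasure μ0]
    [IsProbabilityMeasure μ1] {a b : ℝ} (ha : 0 ≤ a) (hb : 0 ≤ b) (hab : a + b = 1) :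
    IsProbabilityMeasure (ENNReal.ofReal a • μ0 + ENNReal.ofReal b • μ1) := by
  constructor
  rw [Measure.add_apply, Measure.smul_apply, Measure.smul_apply, smul_eq_mul, smul_eq_mul,
    measure_univ, measure_univ, mul_one, mul_one, ← ENNReal.ofReal_add ha hb, hab,
    ENNReal.ofReal_one]

end ERealHelpers


section EOTHelpers

lemma coupling_prob {γ : Measure (α × α)} {μ : Measure α} [IsProbabilityMeasure μ]
    (hfst : γ.map Prod.fst = μ) : IsProbabilityMeasure γ := by
  constructor
  have h : γ.map Prod.fst univ = μ univ := by rw [hfst]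
  rw [Measure.map_apply measurable_fst MeasurableSet.univ, Set.preimage_univ] at h
  rw [h, measure_univ]

lemma EOT_le {c : α × α → ℝ} {τ : ℝ} {μ ν : Measure α} {γ : Measure (α × α)}
    (h1 : γ.map Prod.fst = μ) (h2 : γ.map Prod.snd = ν) :
    EOT c τ μ ν ≤ ((∫ q, c q ∂γ : ℝ) : EReal) + (τ : EReal) * relEnt γ (μ.prod ν) :=
  iInf_le _ (⟨γ, h1, h2⟩ : {γ : Measure (α × α) // γ.map Prod.fst = μ ∧ γ.map Prod.snd = ν})

lemma coupling_support {d : ℕ} {X : Set (Pt d)} (hX : MeasurableSet X)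
    {γ : Measure (Pt d × Pt d)} {μ ν : Measure (Pt d)}
    (hfst : γ.map Prod.fst = μ) (hsnd : γ.map Prod.snd = ν)
    (hμ : μ Xᶜ = 0) (hν : ν Xᶜ = 0) : γ ((X ×ˢ X)ᶜ) = 0 := by
  have hsub : (X ×ˢ X)ᶜ ⊆ (Prod.fst ⁻¹' Xᶜ) ∪ (Prod.snd ⁻¹' Xᶜ) := by
    intro p hp
    simp only [Set.mem_compl_iff, Set.mem_prod, not_and_or] at hp
    simp only [Set.mem_union, Set.mem_preimage, Set.mem_compl_iff]
    exact hp
  refine measure_mono_null hsub ?_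
  have h1 : γ (Prod.fst ⁻¹' Xᶜ) = 0 := by
    rw [← Measure.map_apply measurable_fst hX.compl, hfst, hμ]
  have h2 : γ (Prod.snd ⁻¹' Xᶜ) = 0 := by
    rw [← Measure.map_apply measurable_snd hX.compl, hsnd, hν]
  exact le_antisymm ((measure_union_le _ _).trans (by rw [h1, h2]; simp)) zero_le

lemma cost_bound {d : ℕ} {X : Set (Pt d)}
    {c : Pt d × Pt d → ℝ} (hc : Continuous c) {M : ℝ}
    (hM : ∀ p ∈ X ×ˢ X, ‖c p‖ ≤ M)
    {γ : Measure (Pt d × Pt d)} [IsProbabilityMeasure γ]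
    (hγX : γ ((X ×ˢ X)ᶜ) = 0) :
    Integrable c γ ∧ -M ≤ ∫ p, c p ∂γ := by
  have hae : ∀ᵐ p ∂γ, p ∈ X ×ˢ X := by
    rw [ae_iff]
    convert hγX using 2
    rfl
  have hint : Integrable c γ := by
    refine Integrable.mono' (integrable_const M) hc.aestronglyMeasurable ?_
    filter_upwards [hae] with p hp
    exact hM p hp
  refine ⟨hint, ?_⟩
  have hmono : ∫ _, (-M : ℝ) ∂γ ≤ ∫ p, c p ∂γ := by
    refine integral_mono_ae (integrable_const _) hint ?_
    filter_upwards [hae] with p hp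
    have h2 := hM p hp
    rw [Real.norm_eq_abs] at h2
    have := neg_abs_le (c p)
    linarith
  simpa using hmono

lemma EOT_ne_bot {d : ℕ} {X : Set (Pt d)} (hXc : IsCompact X)
    {c : Pt d × Pt d → ℝ} (hc : Continuous c) {τ : ℝ} (hτ : 0 < τ)
    {μ ν : Measure (Pt d)} [IsProbabilityMeasure μ] [IsProbabilityMeasure ν]
    (hμ : μ Xᶜ = 0) (hν : ν Xᶜ = 0) : EOT c τ μ ν ≠ ⊥ := by
  obtain ⟨M, hM⟩ := (hXc.prod hXc).exists_bound_of_continuousOn hc.continuousOn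
  have hbound : ((-M : ℝ) : EReal) ≤ EOT c τ μ ν := by
    refine le_iInf fun γ => ?_
    obtain ⟨γ', hfst, hsnd⟩ := γ
    haveI : IsProbabilityMeasure γ' := coupling_prob hfst
    have hsupp : γ' ((X ×ˢ X)ᶜ) = 0 :=
      coupling_support hXc.isClosed.measurableSet hfst hsnd hμ hν
    obtain ⟨_, hlow⟩ := cost_bound hc hM hsupp
    have h1 : ((-M : ℝ) : EReal) ≤ ((∫ q, c q ∂γ' : ℝ) : EReal) := by exact_mod_cast hlow
    have h2 : (0 : EReal) ≤ (τ : EReal) * relEnt γ' (μ.prod ν) :=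
      ereal_tau_mul_nonneg hτ.le (relEnt_nonneg γ' (μ.prod ν))
    calc ((-M : ℝ) : EReal) = ((-M : ℝ) : EReal) + 0 := by rw [add_zero]
      _ ≤ ((∫ q, c q ∂γ' : ℝ) : EReal) + (τ : EReal) * relEnt γ' (μ.prod ν) := add_le_add h1 h2
  intro hbot
  rw [hbot] at hbound
  exact absurd hbound (by simp)

end EOTHelpers

end Lemmas

lemma isFiniteMeasure_smul {α : Type*} [MeasurableSpace α] {μ0 : Measure α} [IsFiniteMeasure μ0]
    {c : ℝ≥0∞} (hc : c ≠ ∞) : IsFiniteMeasure (c • μ0) := by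
  constructor
  rw [Measure.smul_apply, smul_eq_mul]
  exact ENNReal.mul_lt_top hc.lt_top (measure_lt_top μ0 univ)

/-- the map `(μ,ν) ↦ T_τ(μ,ν) + τ H(μ|λ_X)` is jointly convex on
`P(X) × P(X)`, where `λ_X` is Lebesgue measure restricted to `X`. -/
theorem stmt_7 {d : ℕ} (X : Set (Pt d)) (hXc : IsCompact X) (hXne : X.Nonempty)
    (hXpos : 0 < volume X)
    (c : Pt d × Pt d → ℝ) (hc : Continuous c) (τ : ℝ) (hτ : 0 < τ)
    (μ₀ ν₀ μ₁ ν₁ : Measure (Pt d))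
    [IsProbabilityMeasure μ₀] [IsProbabilityMeasure ν₀]
    [IsProbabilityMeasure μ₁] [IsProbabilityMeasure ν₁]
    (hμ₀X : μ₀ Xᶜ = 0) (hν₀X : ν₀ Xᶜ = 0) (hμ₁X : μ₁ Xᶜ = 0) (hν₁X : ν₁ Xᶜ = 0)
    (t : ℝ) (ht : t ∈ Icc (0 : ℝ) 1)
    (μt νt : Measure (Pt d))
    (hμt : μt = ENNReal.ofReal (1 - t) • μ₀ + ENNReal.ofReal t • μ₁)
    (hνt : νt = ENNReal.ofReal (1 - t) • ν₀ + ENNReal.ofReal t • ν₁) :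
    EOT c τ μt νt + (τ : EReal) * relEnt μt (volume.restrict X)
      ≤ ((1 - t : ℝ) : EReal) * (EOT c τ μ₀ ν₀ + (τ : EReal) * relEnt μ₀ (volume.restrict X))
        + (t : EReal) * (EOT c τ μ₁ ν₁ + (τ : EReal) * relEnt μ₁ (volume.restrict X)) := by
  have hXmeas : MeasurableSet X := hXc.isClosed.measurableSet
  set lam : Measure (Pt d) := volume.restrict X with hlamdef
  haveI hlamfin : IsFiniteMeasure lam := by
    constructor
    rw [hlamdef, Measure.restrict_apply_univ]
    exact hXc.measure_lt_top
  obtain ⟨ht0, ht1⟩ := ht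
  rcases eq_or_lt_of_le ht0 with h0 | h0
  · rw [hμt, hνt, ← h0]
    simp only [sub_zero, ENNReal.ofReal_one, one_smul, ENNReal.ofReal_zero, zero_smul, add_zero,
      EReal.coe_one, one_mul, EReal.coe_zero, zero_mul]
    exact le_refl _
  rcases eq_or_lt_of_le ht1 with h1 | h1
  · rw [hμt, hνt, h1]
    simp only [sub_self, ENNReal.ofReal_zero, zero_smul, zero_add, ENNReal.ofReal_one, one_smul,
      EReal.coe_zero, zero_mul, EReal.coe_one, one_mul]
    exact le_refl _
  -- main case 0 < t < 1
  set a : ℝ := 1 - t with hadef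
  have ha : 0 < a := by rw [hadef]; linarith
  have hb : 0 < t := h0
  have hab : a + t = 1 := by rw [hadef]; ring
  have ha' : ENNReal.ofReal a ≠ 0 := by
    simp only [ne_eq, ENNReal.ofReal_eq_zero, not_le]; exact ha
  have hb' : ENNReal.ofReal t ≠ 0 := by
    simp only [ne_eq, ENNReal.ofReal_eq_zero, not_le]; exact hb
  haveI hμtP : IsProbabilityMeasure μt := by
    rw [hμt]; exact isProbabilityMeasure_combo ha.le hb.le hab
  haveI hνtP : IsProbabilityMeasure νt := by
    rw [hνt]; exact isProbabilityMeasure_combo ha.le hb.le hab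
  have hE0bot : EOT c τ μ₀ ν₀ ≠ ⊥ := EOT_ne_bot hXc hc hτ hμ₀X hν₀X
  have hE1bot : EOT c τ μ₁ ν₁ ≠ ⊥ := EOT_ne_bot hXc hc hτ hμ₁X hν₁X
  by_cases hR0top : relEnt μ₀ lam = ⊤
  · have hA : EOT c τ μ₀ ν₀ + (τ : EReal) * relEnt μ₀ lam = ⊤ := by
      rw [hR0top, EReal.coe_mul_top_of_pos hτ]
      exact EReal.add_top_of_ne_bot hE0bot
    have hB : EOT c τ μ₁ ν₁ + (τ : EReal) * relEnt μ₁ lam ≠ ⊥ :=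
      ereal_add_ne_bot hE1bot (ereal_tau_mul_ne_bot hτ (relEnt_ne_bot _ _))
    rw [ereal_sum_top_left ha hb hA hB]
    exact le_top
  by_cases hR1top : relEnt μ₁ lam = ⊤
  · have hB : EOT c τ μ₁ ν₁ + (τ : EReal) * relEnt μ₁ lam = ⊤ := by
      rw [hR1top, EReal.coe_mul_top_of_pos hτ]
      exact EReal.add_top_of_ne_bot hE1bot
    have hA : EOT c τ μ₀ ν₀ + (τ : EReal) * relEnt μ₀ lam ≠ ⊥ :=
      ereal_add_ne_bot hE0bot (ereal_tau_mul_ne_bot hτ (relEnt_ne_bot _ _))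
    rw [ereal_sum_top_right ha hb hA hB]
    exact le_top
  by_cases hE0top : EOT c τ μ₀ ν₀ = ⊤
  · have hA : EOT c τ μ₀ ν₀ + (τ : EReal) * relEnt μ₀ lam = ⊤ := by
      rw [hE0top]
      exact EReal.top_add_of_ne_bot (ereal_tau_mul_ne_bot hτ (relEnt_ne_bot _ _))
    have hB : EOT c τ μ₁ ν₁ + (τ : EReal) * relEnt μ₁ lam ≠ ⊥ :=
      ereal_add_ne_bot hE1bot (ereal_tau_mul_ne_bot hτ (relEnt_ne_bot _ _))
    rw [ereal_sum_top_left ha hb hA hB]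
    exact le_top
  by_cases hE1top : EOT c τ μ₁ ν₁ = ⊤
  · have hB : EOT c τ μ₁ ν₁ + (τ : EReal) * relEnt μ₁ lam = ⊤ := by
      rw [hE1top]
      exact EReal.top_add_of_ne_bot (ereal_tau_mul_ne_bot hτ (relEnt_ne_bot _ _))
    have hA : EOT c τ μ₀ ν₀ + (τ : EReal) * relEnt μ₀ lam ≠ ⊥ :=
      ereal_add_ne_bot hE0bot (ereal_tau_mul_ne_bot hτ (relEnt_ne_bot _ _))
    rw [ereal_sum_top_right ha hb hA hB]
    exact le_top
  -- all quantities finite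
  obtain ⟨hac0lam, hint0lam⟩ := relEnt_ne_top_iff.1 hR0top
  obtain ⟨hac1lam, hint1lam⟩ := relEnt_ne_top_iff.1 hR1top
  obtain ⟨e0, hE0⟩ := ereal_exists_real hE0top hE0bot
  obtain ⟨e1, hE1⟩ := ereal_exists_real hE1top hE1bot
  have hR0 : relEnt μ₀ lam = ((∫ x, llr μ₀ lam x ∂μ₀ : ℝ) : EReal) := relEnt_eq hac0lam hint0lam
  have hR1 : relEnt μ₁ lam = ((∫ x, llr μ₁ lam x ∂μ₁ : ℝ) : EReal) := relEnt_eq hac1lam hint1lam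
  rw [hE0, hE1, hR0, hR1]
  have hRHS : ((a : ℝ) : EReal) * ((e0 : EReal) + (τ : EReal) * ((∫ x, llr μ₀ lam x ∂μ₀ : ℝ) : EReal))
      + ((t : ℝ) : EReal) * ((e1 : EReal) + (τ : EReal) * ((∫ x, llr μ₁ lam x ∂μ₁ : ℝ) : EReal))
      = ((a * (e0 + τ * ∫ x, llr μ₀ lam x ∂μ₀) + t * (e1 + τ * ∫ x, llr μ₁ lam x ∂μ₁) : ℝ) : EReal) := by
    norm_cast
  rw [hRHS]
  refine ereal_le_of_forall_eps fun ε hε => ?_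
  -- extract near-minimizing couplings
  have hlt0 : EOT c τ μ₀ ν₀ < ((e0 + ε : ℝ) : EReal) := by
    rw [hE0]; exact_mod_cast (by linarith : e0 < e0 + ε)
  have hlt1 : EOT c τ μ₁ ν₁ < ((e1 + ε : ℝ) : EReal) := by
    rw [hE1]; exact_mod_cast (by linarith : e1 < e1 + ε)
  simp only [EOT] at hlt0 hlt1
  obtain ⟨⟨γ0, hm0fst, hm0snd⟩, hγ0lt⟩ := iInf_lt_iff.1 hlt0
  obtain ⟨⟨γ1, hm1fst, hm1snd⟩, hγ1lt⟩ := iInf_lt_iff.1 hlt1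
  simp only at hγ0lt hγ1lt
  haveI : IsProbabilityMeasure γ0 := coupling_prob hm0fst
  haveI : IsProbabilityMeasure γ1 := coupling_prob hm1fst
  have hrel0top : relEnt γ0 (μ₀.prod ν₀) ≠ ⊤ := by
    intro h
    rw [h, EReal.coe_mul_top_of_pos hτ, EReal.coe_add_top] at hγ0lt
    exact absurd hγ0lt not_top_lt
  have hrel1top : relEnt γ1 (μ₁.prod ν₁) ≠ ⊤ := by
    intro h
    rw [h, EReal.coe_mul_top_of_pos hτ, EReal.coe_add_top] at hγ1lt
    exact absurd hγ1lt not_top_lt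
  obtain ⟨hac0, hint0⟩ := relEnt_ne_top_iff.1 hrel0top
  obtain ⟨hac1, hint1⟩ := relEnt_ne_top_iff.1 hrel1top
  rw [relEnt_eq hac0 hint0] at hγ0lt
  rw [relEnt_eq hac1 hint1] at hγ1lt
  have hC0 : ∫ q, c q ∂γ0 + τ * ∫ p, llr γ0 (μ₀.prod ν₀) p ∂γ0 < e0 + ε := by
    exact_mod_cast hγ0lt
  have hC1 : ∫ q, c q ∂γ1 + τ * ∫ p, llr γ1 (μ₁.prod ν₁) p ∂γ1 < e1 + ε := by
    exact_mod_cast hγ1lt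
  -- chain rule, forward, at the endpoints
  obtain ⟨hacl0, hw0int, hw0eq⟩ := chain_forward hm0fst hac0 hac0lam hint0 hint0lam
  obtain ⟨hacl1, hw1int, hw1eq⟩ := chain_forward hm1fst hac1 hac1lam hint1 hint1lam
  -- joint convexity of relative entropy
  obtain ⟨hmixac, hmixint, hmixle⟩ := relEnt_mix hacl0 hacl1 hw0int hw1int ha hb hab
  -- identify the mixture reference with lam.prod νt
  haveI : IsFiniteMeasure (ENNReal.ofReal a • ν₀) := isFiniteMeasure_smul ENNReal.ofReal_ne_top
  haveI : IsFiniteMeasure (ENNReal.ofReal t • ν₁) := isFiniteMeasure_smul ENNReal.ofReal_ne_top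
  have hprodmix : lam.prod νt
      = ENNReal.ofReal a • (lam.prod ν₀) + ENNReal.ofReal t • (lam.prod ν₁) := by
    rw [hνt, Measure.prod_add, prod_smul_right lam ν₀ _ ENNReal.ofReal_ne_top,
      prod_smul_right lam ν₁ _ ENNReal.ofReal_ne_top]
  set γt : Measure (Pt d × Pt d) := ENNReal.ofReal a • γ0 + ENNReal.ofReal t • γ1 with hγtdef
  rw [← hprodmix] at hmixac hmixint hmixle
  haveI : IsProbabilityMeasure γt := isProbabilityMeasure_combo ha.le hb.le hab
  have hfst_t : γt.map Prod.fst = μt := by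
    rw [hγtdef, Measure.map_add _ _ measurable_fst, Measure.map_smul, Measure.map_smul,
      hm0fst, hm1fst, hμt]
  have hsnd_t : γt.map Prod.snd = νt := by
    rw [hγtdef, Measure.map_add _ _ measurable_snd, Measure.map_smul, Measure.map_smul,
      hm0snd, hm1snd, hνt]
  have hμ0t : μ₀ ≪ μt := by rw [hμt]; exact ac_add_smul_left ha'
  have hμ1t : μ₁ ≪ μt := by rw [hμt]; exact ac_add_smul_right hb'
  have hν0t : ν₀ ≪ νt := by rw [hνt]; exact ac_add_smul_left ha'
  have hν1t : ν₁ ≪ νt := by rw [hνt]; exact ac_add_smul_right hb'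
  have hμtlam : μt ≪ lam := by rw [hμt]; exact add_smul_ac hac0lam hac1lam _ _
  have hγ0t : γ0 ≪ μt.prod νt := hac0.trans (Measure.AbsolutelyContinuous.prod hμ0t hν0t)
  have hγ1t : γ1 ≪ μt.prod νt := hac1.trans (Measure.AbsolutelyContinuous.prod hμ1t hν1t)
  have hac_t : γt ≪ μt.prod νt := by rw [hγtdef]; exact add_smul_ac hγ0t hγ1t _ _
  -- chain rule, reverse, at t
  obtain ⟨hut_int, hyt_int, heq_t⟩ := chain_reverse hfst_t hac_t hμtlam hmixint
  -- cost integrability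
  obtain ⟨Mbd, hMbd⟩ := (hXc.prod hXc).exists_bound_of_continuousOn hc.continuousOn
  have hsupp0 : γ0 ((X ×ˢ X)ᶜ) = 0 := coupling_support hXmeas hm0fst hm0snd hμ₀X hν₀X
  have hsupp1 : γ1 ((X ×ˢ X)ᶜ) = 0 := coupling_support hXmeas hm1fst hm1snd hμ₁X hν₁X
  obtain ⟨hcint0, -⟩ := cost_bound hc hMbd hsupp0
  obtain ⟨hcint1, -⟩ := cost_bound hc hMbd hsupp1
  have hcost_t : ∫ q, c q ∂γt = a * ∫ q, c q ∂γ0 + t * ∫ q, c q ∂γ1 := by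
    rw [hγtdef, integral_add_measure
      ((integrable_smul_measure ha' ENNReal.ofReal_ne_top).2 hcint0)
      ((integrable_smul_measure hb' ENNReal.ofReal_ne_top).2 hcint1),
      integral_smul_measure, integral_smul_measure, ENNReal.toReal_ofReal ha.le,
      ENNReal.toReal_ofReal hb.le, smul_eq_mul, smul_eq_mul]
  -- EReal assembly
  have hEOTt : EOT c τ μt νt
      ≤ ((∫ q, c q ∂γt + τ * ∫ p, llr γt (μt.prod νt) p ∂γt : ℝ) : EReal) := by
    have h := EOT_le (c := c) (τ := τ) hfst_t hsnd_t
    rw [relEnt_eq hac_t hut_int] at h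
    rw [show ((∫ q, c q ∂γt + τ * ∫ p, llr γt (μt.prod νt) p ∂γt : ℝ) : EReal)
      = ((∫ q, c q ∂γt : ℝ) : EReal)
        + (τ : EReal) * ((∫ p, llr γt (μt.prod νt) p ∂γt : ℝ) : EReal) by norm_cast]
    exact h
  have hrelEnt_t : relEnt μt lam = ((∫ x, llr μt lam x ∂μt : ℝ) : EReal) :=
    relEnt_eq hμtlam hyt_int
  -- the real-number estimate
  have hmix2 : ∫ p, llr γt (μt.prod νt) p ∂γt + ∫ x, llr μt lam x ∂μt
      ≤ a * (∫ p, llr γ0 (μ₀.prod ν₀) p ∂γ0 + ∫ x, llr μ₀ lam x ∂μ₀)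
        + t * (∫ p, llr γ1 (μ₁.prod ν₁) p ∂γ1 + ∫ x, llr μ₁ lam x ∂μ₁) := by
    rw [← hw0eq, ← hw1eq, ← heq_t]
    exact hmixle
  have hkey : ∫ q, c q ∂γt + τ * ∫ p, llr γt (μt.prod νt) p ∂γt + τ * ∫ x, llr μt lam x ∂μt
      ≤ (a * (e0 + τ * ∫ x, llr μ₀ lam x ∂μ₀) + t * (e1 + τ * ∫ x, llr μ₁ lam x ∂μ₁)) + ε := by
    have hm0' : a * (∫ q, c q ∂γ0 + τ * ∫ p, llr γ0 (μ₀.prod ν₀) p ∂γ0) ≤ a * (e0 + ε) :=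
      mul_le_mul_of_nonneg_left hC0.le ha.le
    have hm1' : t * (∫ q, c q ∂γ1 + τ * ∫ p, llr γ1 (μ₁.prod ν₁) p ∂γ1) ≤ t * (e1 + ε) :=
      mul_le_mul_of_nonneg_left hC1.le hb.le
    have hmτ : τ * (∫ p, llr γt (μt.prod νt) p ∂γt + ∫ x, llr μt lam x ∂μt)
        ≤ τ * (a * (∫ p, llr γ0 (μ₀.prod ν₀) p ∂γ0 + ∫ x, llr μ₀ lam x ∂μ₀)
          + t * (∫ p, llr γ1 (μ₁.prod ν₁) p ∂γ1 + ∫ x, llr μ₁ lam x ∂μ₁)) :=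
      mul_le_mul_of_nonneg_left hmix2 hτ.le
    rw [hcost_t]
    nlinarith [hm0', hm1', hmτ, hab]
  calc EOT c τ μt νt + (τ : EReal) * relEnt μt lam
      ≤ ((∫ q, c q ∂γt + τ * ∫ p, llr γt (μt.prod νt) p ∂γt : ℝ) : EReal)
        + ((τ * ∫ x, llr μt lam x ∂μt : ℝ) : EReal) := by
        refine add_le_add hEOTt ?_
        rw [hrelEnt_t]
        exact le_of_eq (by norm_cast)
    _ = ((∫ q, c q ∂γt + τ * ∫ p, llr γt (μt.prod νt) p ∂γt
          + τ * ∫ x, llr μt lam x ∂μt : ℝ) : EReal) := by norm_cast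
    _ ≤ ((a * (e0 + τ * ∫ x, llr μ₀ lam x ∂μ₀) + t * (e1 + τ * ∫ x, llr μ₁ lam x ∂μ₁) + ε : ℝ)
          : EReal) := by exact_mod_cast hkey
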